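/- Let x_j be a continuous, globally bounded, strictly sub-luminal trajectory with advanced light-cone time t⁺(t,x), advanced delay function φ(t,x), and unit normal field n̂(t,x) = (x − x_j(t⁺(t,x)))/φ(t,x) defined where φ > 0. Let (t₀, x₀) satisfy φ(t₀, x₀) > 0 and assume x_j is continuously differentiable on a neighborhood of s₀ = t⁺(t₀, x₀) with ‖x_j′‖ < 1 there. Then the map x ↦ n̂(t₀, x) is differentiable at x₀ and its divergence equals 2/φ(t₀, x₀), i.e. ∇·n̂(t₀, x₀) = 2/φ(t₀, x₀). -/

import Mathlib

open scoped RealInnerProductSpace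

/-- Derivative of the norm in a real inner product space at a nonzero point. -/
lemma hasStrictFDerivAt_norm_of_ne {F : Type*} [NormedAddCommGroup F]
    [InnerProductSpace ℝ F] {y : F} (hy : y ≠ 0) :
    HasStrictFDerivAt (fun z : F => ‖z‖) (‖y‖⁻¹ • innerSL ℝ y) y := by
  have hsq : HasStrictFDerivAt (fun z : F => ‖z‖ ^ 2) (2 • innerSL ℝ y) y :=
    hasStrictFDerivAt_norm_sq y
  have hyn : ‖y‖ ≠ 0 := norm_ne_zero_iff.2 hy
  have h0 : (‖y‖ : ℝ) ^ 2 ≠ 0 := pow_ne_zero 2 hyn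
  have h2 := hsq.sqrt h0
  have heq : (fun z : F => Real.sqrt (‖z‖ ^ 2)) = fun z : F => ‖z‖ := by
    funext z; rw [Real.sqrt_sq (norm_nonneg z)]
  rw [heq] at h2
  convert h2 using 1
  rw [Real.sqrt_sq (norm_nonneg y)]
  ext h
  simp only [ContinuousLinearMap.smul_apply, smul_eq_mul, nsmul_eq_mul,
    ContinuousLinearMap.coe_smul', Pi.smul_apply]
  field_simp
  ring

set_option maxHeartbeats 2000000 in
theorem stmt_4 (xj : ℝ → EuclideanSpace ℝ (Fin 3))
    (hcont : Continuous xj)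
    (hbdd : Bornology.IsBounded (Set.range xj))
    (hsub : ∀ a b : ℝ, a ≠ b → ‖xj a - xj b‖ < |a - b|)
    (tplus : ℝ → EuclideanSpace ℝ (Fin 3) → ℝ)
    (htp : ∀ t x, tplus t x = t + ‖x - xj (tplus t x)‖)
    (t₀ : ℝ) (x₀ : EuclideanSpace ℝ (Fin 3))
    (hpos : 0 < ‖x₀ - xj (tplus t₀ x₀)‖)
    (v' : ℝ → EuclideanSpace ℝ (Fin 3)) (U : Set ℝ)
    (hU : U ∈ nhds (tplus t₀ x₀))
    (hderiv : ∀ s ∈ U, HasDerivAt xj (v' s) s)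
    (hcv : ContinuousOn v' U)
    (hlum : ∀ s ∈ U, ‖v' s‖ < 1) :
    DifferentiableAt ℝ
        (fun x : EuclideanSpace ℝ (Fin 3) =>
          ‖x - xj (tplus t₀ x)‖⁻¹ • (x - xj (tplus t₀ x))) x₀ ∧
    ∑ i : Fin 3,
        (fderiv ℝ
            (fun x : EuclideanSpace ℝ (Fin 3) =>
              ‖x - xj (tplus t₀ x)‖⁻¹ • (x - xj (tplus t₀ x))) x₀
          (EuclideanSpace.single i 1)) i
      = 2 / ‖x₀ - xj (tplus t₀ x₀)‖ := by
  classical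
  set s₀ : ℝ := tplus t₀ x₀ with hs₀
  set y₀ : EuclideanSpace ℝ (Fin 3) := x₀ - xj s₀ with hy₀def
  set φ₀ : ℝ := ‖y₀‖ with hφ₀def
  have hφ₀ : 0 < φ₀ := hpos
  have hφ₀ne : φ₀ ≠ 0 := ne_of_gt hφ₀
  have hy₀ : y₀ ≠ 0 := by
    intro h
    rw [hφ₀def, h, norm_zero] at hφ₀
    exact lt_irrefl 0 hφ₀
  set n₀ : EuclideanSpace ℝ (Fin 3) := φ₀⁻¹ • y₀ with hn₀def
  have hn₀norm : ‖n₀‖ = 1 := by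
    rw [hn₀def, norm_smul, norm_inv, Real.norm_eq_abs, abs_of_pos hφ₀]
    field_simp
    exact hφ₀def.symm
  set v : EuclideanSpace ℝ (Fin 3) := v' s₀ with hvdef
  have hs₀U : s₀ ∈ U := mem_of_mem_nhds hU
  have hvlt : ‖v‖ < 1 := hlum s₀ hs₀U
  set α : ℝ := ⟪n₀, v⟫ with hαdef
  have hαlt : |α| < 1 := by
    calc |α| ≤ ‖n₀‖ * ‖v‖ := abs_real_inner_le_norm n₀ v
    _ = ‖v‖ := by rw [hn₀norm, one_mul]
    _ < 1 := hvlt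
  have h1α : (0:ℝ) < 1 + α := by linarith [(abs_lt.1 hαlt).1]
  have h1αne : (1:ℝ) + α ≠ 0 := ne_of_gt h1α
  -- strict monotonicity in s of s - ‖x - xj s‖
  have mono : ∀ (x : EuclideanSpace ℝ (Fin 3)) (a b : ℝ), a < b →
      a - ‖x - xj a‖ < b - ‖x - xj b‖ := by
    intro x a b hab
    have h1 : ‖xj a - xj b‖ < |a - b| := hsub a b (ne_of_lt hab)
    have h2 : ‖x - xj b‖ - ‖x - xj a‖ ≤ ‖(x - xj b) - (x - xj a)‖ :=
      norm_sub_norm_le _ _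
    have h3 : (x - xj b) - (x - xj a) = xj a - xj b := by abel
    rw [h3] at h2
    rw [abs_of_neg (by linarith : a - b < 0)] at h1
    linarith
  have hroot : ∀ x : EuclideanSpace ℝ (Fin 3),
      tplus t₀ x - ‖x - xj (tplus t₀ x)‖ = t₀ := by
    intro x; have := htp t₀ x; linarith
  -- continuity of g at x₀
  have hgc : ContinuousAt (fun x : EuclideanSpace ℝ (Fin 3) => tplus t₀ x) x₀ := by
    rw [Metric.continuousAt_iff]
    intro ε hε
    have ha : (s₀ - ε/2) - ‖x₀ - xj (s₀ - ε/2)‖ < s₀ - ‖x₀ - xj s₀‖ :=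
      mono x₀ _ s₀ (by linarith)
    have hb : s₀ - ‖x₀ - xj s₀‖ < (s₀ + ε/2) - ‖x₀ - xj (s₀ + ε/2)‖ :=
      mono x₀ s₀ _ (by linarith)
    have h0 : s₀ - ‖x₀ - xj s₀‖ = t₀ := hroot x₀
    set p := (s₀ + ε/2) - ‖x₀ - xj (s₀ + ε/2)‖ - t₀ with hp
    set q := t₀ - ((s₀ - ε/2) - ‖x₀ - xj (s₀ - ε/2)‖) with hq
    have hp0 : 0 < p := by rw [hp, ← h0]; linarith
    have hq0 : 0 < q := by rw [hq, ← h0]; linarith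
    refine ⟨min p q, lt_min hp0 hq0, ?_⟩
    intro x hx
    rw [dist_eq_norm] at hx
    have hrt : tplus t₀ x - ‖x - xj (tplus t₀ x)‖ = t₀ := hroot x
    have hxb : ∀ c : ℝ, |‖x - xj c‖ - ‖x₀ - xj c‖| ≤ ‖x - x₀‖ := by
      intro c
      have h := abs_norm_sub_norm_le (x - xj c) (x₀ - xj c)
      have h3 : (x - xj c) - (x₀ - xj c) = x - x₀ := by abel
      rwa [h3] at h
    have hxp : ‖x - x₀‖ < p := lt_of_lt_of_le hx (min_le_left _ _)
    have hxq : ‖x - x₀‖ < q := lt_of_lt_of_le hx (min_le_right _ _)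
    have hsb : tplus t₀ x < s₀ + ε/2 := by
      by_contra hsb
      push_neg at hsb
      have hmono : (s₀ + ε/2) - ‖x - xj (s₀ + ε/2)‖ ≤ t₀ := by
        rcases eq_or_lt_of_le hsb with h | h
        · rw [← h] at hrt; linarith
        · have := mono x _ _ h; linarith
      have h1 := (abs_le.1 (hxb (s₀ + ε/2))).2
      rw [hp] at hxp
      linarith
    have hsa : s₀ - ε/2 < tplus t₀ x := by
      by_contra hsa
      push_neg at hsa
      have hmono : t₀ ≤ (s₀ - ε/2) - ‖x - xj (s₀ - ε/2)‖ := by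
        rcases eq_or_lt_of_le hsa with h | h
        · rw [h] at hrt; linarith
        · have := mono x _ _ h; linarith
      have h1 := (abs_le.1 (hxb (s₀ - ε/2))).1
      rw [hq] at hxq
      linarith
    rw [Real.dist_eq, abs_lt]
    constructor <;> [skip; skip] <;> rw [← hs₀] <;> [linarith; linarith]
  -- strict differentiability of xj at s₀
  have hxs : HasStrictDerivAt xj v s₀ :=
    hasStrictDerivAt_of_hasDerivAt_of_continuousAt
      (Filter.eventually_of_mem hU hderiv) (hcv.continuousAt hU)
  -- derivative of the norm at y₀
  have hnorm : HasStrictFDerivAt (fun z : EuclideanSpace ℝ (Fin 3) => ‖z‖)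
      (innerSL ℝ n₀) y₀ := by
    have h := hasStrictFDerivAt_norm_of_ne hy₀
    have heq : (‖y₀‖⁻¹ • innerSL ℝ y₀ : EuclideanSpace ℝ (Fin 3) →L[ℝ] ℝ)
        = innerSL ℝ n₀ := by
      ext h
      simp [hn₀def, real_inner_smul_left, hφ₀def]
    rwa [heq] at h
  -- the two-variable map and its derivative
  set B₁ : (EuclideanSpace ℝ (Fin 3) × ℝ) →L[ℝ] EuclideanSpace ℝ (Fin 3) :=
    ContinuousLinearMap.fst ℝ _ _ -
      ((1 : ℝ →L[ℝ] ℝ).smulRight v).comp (ContinuousLinearMap.snd ℝ (EuclideanSpace ℝ (Fin 3)) ℝ) with hB₁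
  have hxsF : HasStrictFDerivAt xj ((1 : ℝ →L[ℝ] ℝ).smulRight v) s₀ := hxs
  have hxj2 : HasStrictFDerivAt (fun p : EuclideanSpace ℝ (Fin 3) × ℝ => xj p.2)
      (((1 : ℝ →L[ℝ] ℝ).smulRight v).comp (ContinuousLinearMap.snd ℝ (EuclideanSpace ℝ (Fin 3)) ℝ)) (x₀, s₀) :=
    HasStrictFDerivAt.comp (x₀, s₀) hxsF hasStrictFDerivAt_snd
  have hY : HasStrictFDerivAt
      (fun p : EuclideanSpace ℝ (Fin 3) × ℝ => p.1 - xj p.2) B₁ (x₀, s₀) := by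
    exact (hasStrictFDerivAt_fst).sub hxj2
  set Dψ : (EuclideanSpace ℝ (Fin 3) × ℝ) →L[ℝ] ℝ :=
    ContinuousLinearMap.snd ℝ _ _ - (innerSL ℝ n₀).comp B₁ with hDψ
  set DΦ : (EuclideanSpace ℝ (Fin 3) × ℝ) →L[ℝ] (EuclideanSpace ℝ (Fin 3) × ℝ) :=
    (ContinuousLinearMap.fst ℝ _ _).prod Dψ with hDΦ
  set Φ : (EuclideanSpace ℝ (Fin 3) × ℝ) → (EuclideanSpace ℝ (Fin 3) × ℝ) :=
    fun p => (p.1, p.2 - t₀ - ‖p.1 - xj p.2‖) with hΦdef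
  have hΦs : HasStrictFDerivAt Φ DΦ (x₀, s₀) := by
    apply HasStrictFDerivAt.prodMk
    · exact hasStrictFDerivAt_fst
    · have h2 : HasStrictFDerivAt
          (fun p : EuclideanSpace ℝ (Fin 3) × ℝ => ‖p.1 - xj p.2‖)
          ((innerSL ℝ n₀).comp B₁) (x₀, s₀) := hnorm.comp (x₀, s₀) hY
      exact (hasStrictFDerivAt_snd.sub_const t₀).sub h2
  -- the derivative as a continuous linear equivalence
  set DΦinv : (EuclideanSpace ℝ (Fin 3) × ℝ) →L[ℝ] (EuclideanSpace ℝ (Fin 3) × ℝ) :=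
    (ContinuousLinearMap.fst ℝ _ _).prod
      ((1+α)⁻¹ • (ContinuousLinearMap.snd ℝ _ _ +
        (innerSL ℝ n₀).comp (ContinuousLinearMap.fst ℝ _ _))) with hDΦinv
  have hli : Function.LeftInverse DΦinv DΦ := by
    intro p
    apply Prod.ext
    · simp [hDΦ, hDΦinv]
    · simp only [hDΦ, hDΦinv, hDψ, hB₁, ContinuousLinearMap.prod_apply,
        ContinuousLinearMap.coe_fst', ContinuousLinearMap.coe_snd',
        ContinuousLinearMap.coe_sub', Pi.sub_apply, ContinuousLinearMap.comp_apply,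
        ContinuousLinearMap.smulRight_apply, ContinuousLinearMap.one_apply,
        one_smul, innerSL_apply_apply, ContinuousLinearMap.coe_smul', Pi.smul_apply,
        ContinuousLinearMap.add_apply, smul_eq_mul, inner_sub_right,
        real_inner_smul_right]
      rw [← hαdef]
      field_simp
      ring
  have hri : Function.RightInverse DΦinv DΦ := by
    intro p
    apply Prod.ext
    · simp [hDΦ, hDΦinv]
    · simp only [hDΦ, hDΦinv, hDψ, hB₁, ContinuousLinearMap.prod_apply,
        ContinuousLinearMap.coe_fst', ContinuousLinearMap.coe_snd',
        ContinuousLinearMap.coe_sub', Pi.sub_apply, ContinuousLinearMap.comp_apply,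
        ContinuousLinearMap.smulRight_apply, ContinuousLinearMap.one_apply,
        one_smul, innerSL_apply_apply, ContinuousLinearMap.coe_smul', Pi.smul_apply,
        ContinuousLinearMap.add_apply, smul_eq_mul, inner_sub_right,
        real_inner_smul_right]
      rw [← hαdef]
      field_simp
      ring
  set A : (EuclideanSpace ℝ (Fin 3) × ℝ) ≃L[ℝ] (EuclideanSpace ℝ (Fin 3) × ℝ) :=
    ContinuousLinearEquiv.equivOfInverse DΦ DΦinv hli hri with hA
  have hAcoe : (A : (EuclideanSpace ℝ (Fin 3) × ℝ) →L[ℝ] (EuclideanSpace ℝ (Fin 3) × ℝ)) = DΦ := rfl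
  have hAsymm : (A.symm : (EuclideanSpace ℝ (Fin 3) × ℝ) →L[ℝ] (EuclideanSpace ℝ (Fin 3) × ℝ)) = DΦinv := rfl
  have hΦ' : HasStrictFDerivAt Φ (A : (EuclideanSpace ℝ (Fin 3) × ℝ) →L[ℝ] (EuclideanSpace ℝ (Fin 3) × ℝ)) (x₀, s₀) := by
    rw [hAcoe]; exact hΦs
  have hΦx₀ : Φ (x₀, s₀) = (x₀, 0) := by
    have := hroot x₀
    simp only [hΦdef]
    rw [Prod.mk.injEq]
    exact ⟨rfl, by rw [← hs₀] at this; rw [← hy₀def]; rw [← hy₀def] at this; linarith⟩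
  -- the local inverse
  set Ψ := hΦ'.localInverse Φ A (x₀, s₀) with hΨ
  have hΨs : HasStrictFDerivAt Ψ
      (A.symm : (EuclideanSpace ℝ (Fin 3) × ℝ) →L[ℝ] (EuclideanSpace ℝ (Fin 3) × ℝ))
      (x₀, 0) := by
    have := hΦ'.to_localInverse
    rwa [hΦx₀] at this
  -- eventually, Ψ (x, 0) = (x, tplus t₀ x)
  have key : ∀ᶠ x in nhds x₀, Ψ (x, 0) = (x, tplus t₀ x) := by
    have hsrc : (hΦ'.toOpenPartialHomeomorph Φ).source ∈ nhds ((x₀, s₀) : EuclideanSpace ℝ (Fin 3) × ℝ) :=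
      (hΦ'.toOpenPartialHomeomorph Φ).open_source.mem_nhds hΦ'.mem_toOpenPartialHomeomorph_source
    have hcurve : ContinuousAt (fun x : EuclideanSpace ℝ (Fin 3) => ((x, tplus t₀ x) : EuclideanSpace ℝ (Fin 3) × ℝ)) x₀ :=
      continuousAt_id.prodMk hgc
    have hev : ∀ᶠ x in nhds x₀, ((x, tplus t₀ x) : EuclideanSpace ℝ (Fin 3) × ℝ) ∈ (hΦ'.toOpenPartialHomeomorph Φ).source := by
      have := hcurve.preimage_mem_nhds (by rwa [← hs₀] : (hΦ'.toOpenPartialHomeomorph Φ).source ∈ nhds ((x₀, tplus t₀ x₀) : EuclideanSpace ℝ (Fin 3) × ℝ))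
      exact Filter.eventually_of_mem this (fun x hx => hx)
    filter_upwards [hev] with x hmem
    have hΦx : Φ (x, tplus t₀ x) = (x, 0) := by
      have := hroot x
      simp only [hΦdef]
      rw [Prod.mk.injEq]
      exact ⟨rfl, by linarith⟩
    have hleft : Ψ (Φ (x, tplus t₀ x)) = (x, tplus t₀ x) := by
      rw [hΨ, HasStrictFDerivAt.localInverse_def]
      exact (hΦ'.toOpenPartialHomeomorph Φ).left_inv hmem
    rw [← hΦx, hleft]
  -- derivative of the implicit function
  set G : EuclideanSpace ℝ (Fin 3) →L[ℝ] ℝ := (1 + α)⁻¹ • innerSL ℝ n₀ with hG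
  have gdiff : HasFDerivAt (fun x : EuclideanSpace ℝ (Fin 3) => tplus t₀ x) G x₀ := by
    have hinl : HasFDerivAt (fun x : EuclideanSpace ℝ (Fin 3) => ((x, 0) : EuclideanSpace ℝ (Fin 3) × ℝ))
        (ContinuousLinearMap.inl ℝ (EuclideanSpace ℝ (Fin 3)) ℝ) x₀ :=
      (ContinuousLinearMap.inl ℝ (EuclideanSpace ℝ (Fin 3)) ℝ).hasFDerivAt
    have h2 : HasFDerivAt (fun x : EuclideanSpace ℝ (Fin 3) => Ψ (x, 0))
        ((A.symm : (EuclideanSpace ℝ (Fin 3) × ℝ) →L[ℝ] (EuclideanSpace ℝ (Fin 3) × ℝ)).comp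
          (ContinuousLinearMap.inl ℝ (EuclideanSpace ℝ (Fin 3)) ℝ)) x₀ :=
      HasFDerivAt.comp x₀ hΨs.hasFDerivAt hinl
    have h3 : HasFDerivAt (fun x : EuclideanSpace ℝ (Fin 3) => (Ψ (x, 0)).2)
        ((ContinuousLinearMap.snd ℝ (EuclideanSpace ℝ (Fin 3)) ℝ).comp
          ((A.symm : (EuclideanSpace ℝ (Fin 3) × ℝ) →L[ℝ] (EuclideanSpace ℝ (Fin 3) × ℝ)).comp
            (ContinuousLinearMap.inl ℝ (EuclideanSpace ℝ (Fin 3)) ℝ))) x₀ :=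
      HasFDerivAt.comp x₀ (ContinuousLinearMap.snd ℝ (EuclideanSpace ℝ (Fin 3)) ℝ).hasFDerivAt h2
    have heq : (fun x : EuclideanSpace ℝ (Fin 3) => tplus t₀ x) =ᶠ[nhds x₀]
        (fun x : EuclideanSpace ℝ (Fin 3) => (Ψ (x, 0)).2) := by
      filter_upwards [key] with x hx
      rw [hx]
    have h4 := h3.congr_of_eventuallyEq heq
    convert h4 using 1
    rw [hG]
    ext h
    simp only [ContinuousLinearMap.coe_comp', Function.comp_apply,
      ContinuousLinearMap.inl_apply, hAsymm, hDΦinv,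
      ContinuousLinearMap.prod_apply, ContinuousLinearMap.coe_snd',
      ContinuousLinearMap.coe_fst', ContinuousLinearMap.coe_smul', Pi.smul_apply,
      ContinuousLinearMap.add_apply, ContinuousLinearMap.comp_apply,
      innerSL_apply_apply, smul_eq_mul]
    ring
  -- derivative of x ↦ x - xj (tplus t₀ x)
  have hxjg : HasFDerivAt (fun x : EuclideanSpace ℝ (Fin 3) => xj (tplus t₀ x))
      (((1 : ℝ →L[ℝ] ℝ).smulRight v).comp G) x₀ :=
    HasFDerivAt.comp x₀ hxsF.hasFDerivAt gdiff
  set Bm : EuclideanSpace ℝ (Fin 3) →L[ℝ] EuclideanSpace ℝ (Fin 3) :=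
    ContinuousLinearMap.id ℝ (EuclideanSpace ℝ (Fin 3)) -
      ((1 : ℝ →L[ℝ] ℝ).smulRight v).comp G with hBm
  have hYx : HasFDerivAt (fun x : EuclideanSpace ℝ (Fin 3) => x - xj (tplus t₀ x)) Bm x₀ :=
    (hasFDerivAt_id x₀).sub hxjg
  set Cm : EuclideanSpace ℝ (Fin 3) →L[ℝ] ℝ := (innerSL ℝ n₀).comp Bm with hCm
  have hφx : HasFDerivAt (fun x : EuclideanSpace ℝ (Fin 3) => ‖x - xj (tplus t₀ x)‖) Cm x₀ :=
    HasFDerivAt.comp x₀ hnorm.hasFDerivAt hYx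
  have hφinv : HasFDerivAt (fun x : EuclideanSpace ℝ (Fin 3) => ‖x - xj (tplus t₀ x)‖⁻¹)
      ((-(φ₀^2)⁻¹) • Cm) x₀ :=
    (hasDerivAt_inv hφ₀ne).comp_hasFDerivAt x₀ hφx
  set L : EuclideanSpace ℝ (Fin 3) →L[ℝ] EuclideanSpace ℝ (Fin 3) :=
    φ₀⁻¹ • Bm + ((-(φ₀^2)⁻¹) • Cm).smulRight y₀ with hL
  have hN : HasFDerivAt (fun x : EuclideanSpace ℝ (Fin 3) =>
      ‖x - xj (tplus t₀ x)‖⁻¹ • (x - xj (tplus t₀ x))) L x₀ := hφinv.smul hYx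
  refine ⟨hN.differentiableAt, ?_⟩
  rw [hN.fderiv]
  -- inner products with basis vectors
  have hinner_single : ∀ i : Fin 3, ⟪n₀, EuclideanSpace.single i (1:ℝ)⟫ = n₀ i := by
    intro i
    rw [real_inner_comm]
    simp [EuclideanSpace.inner_single_left]
  have hsingle_self : ∀ i : Fin 3, (EuclideanSpace.single i (1:ℝ)) i = 1 := by
    intro i; simp [EuclideanSpace.single_apply]
  -- pointwise formula
  have hterm : ∀ i : Fin 3, (L (EuclideanSpace.single i 1)) i =
      φ₀⁻¹ + (-(φ₀⁻¹ * (1+α)⁻¹)) * (n₀ i * v i)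
        + (-((φ₀^2)⁻¹ * (1 - (1+α)⁻¹ * α))) * (n₀ i * y₀ i) := by
    intro i
    have hBapply : Bm (EuclideanSpace.single i 1) =
        EuclideanSpace.single i 1 - ((1+α)⁻¹ * (n₀ i)) • v := by
      simp [hBm, hG, hinner_single i, smul_smul]
    have hCapply : Cm (EuclideanSpace.single i 1) = n₀ i - (1+α)⁻¹ * n₀ i * α := by
      rw [hCm]
      simp only [ContinuousLinearMap.comp_apply, innerSL_apply_apply, hBapply,
        inner_sub_right, real_inner_smul_right, hinner_single i, ← hαdef]
      try ring
    simp only [hL, ContinuousLinearMap.add_apply, ContinuousLinearMap.coe_smul',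
      Pi.smul_apply, ContinuousLinearMap.smulRight_apply, hBapply, hCapply,
      PiLp.add_apply, PiLp.smul_apply, PiLp.sub_apply, smul_eq_mul, hsingle_self i]
    ring
  simp only [hterm]
  -- the three sums
  have hsum_nv : ∑ i : Fin 3, n₀ i * v i = α := by
    rw [hαdef, PiLp.inner_apply]
    simp [RCLike.inner_apply, conj_trivial]
    exact Finset.sum_congr rfl (fun i _ => mul_comm _ _)
  have hsum_ny : ∑ i : Fin 3, n₀ i * y₀ i = φ₀ := by
    have h1 : ⟪n₀, y₀⟫ = φ₀ := by
      rw [hn₀def, real_inner_smul_left, real_inner_self_eq_norm_sq, ← hφ₀def]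
      field_simp
    rw [← h1, PiLp.inner_apply]
    simp [RCLike.inner_apply, conj_trivial]
    exact Finset.sum_congr rfl (fun i _ => mul_comm _ _)
  rw [Finset.sum_add_distrib, Finset.sum_add_distrib, ← Finset.mul_sum, ← Finset.mul_sum,
    hsum_nv, hsum_ny, Finset.sum_const, Finset.card_univ]
  simp only [Fintype.card_fin, nsmul_eq_mul, Nat.cast_ofNat]
  field_simp
  ring
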